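/- Fix λ ∈ [0,1], θ ∈ [0, π/2], φ ∈ ℝ, and set k = 1 − 2λ. Let ρ = diag(λ, 1−λ), let s₁ = (cos θ, e^{iφ} sin θ), s₂ = (−e^{−iφ} sin θ, cos θ) in ℂ², and σ = λ s₁s₁† + (1−λ) s₂s₂†. Then the root fidelity satisfies F(ρ,σ) := tr[ √( √ρ · σ · √ρ ) ] = F₊ + F₋, where F_± = ½ √( 1 + k² cos 2θ ± 2k cos θ · √(1 − k² sin²θ) ); consequently the Bures angle is 𝓛(ρ,σ) = arccos(F₊ + F₋). -/

import Mathlib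

open Matrix ComplexOrder

noncomputable section

/-- The positive semidefinite square root of a positive semidefinite matrix
(the definition removed from Mathlib, restored with its old meaning). -/
def Matrix.PosSemidef.sqrt {n 𝕜 : Type*} [Fintype n] [RCLike 𝕜] [DecidableEq n]
    {A : Matrix n n 𝕜} (hA : A.PosSemidef) : Matrix n n 𝕜 :=
  (hA.1.eigenvectorUnitary : Matrix n n 𝕜) *
    diagonal (fun i => ((Real.sqrt (hA.1.eigenvalues i) : ℝ) : 𝕜)) *
    (star hA.1.eigenvectorUnitary : Matrix n n 𝕜)

open scoped MatrixOrder in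
lemma Matrix.PosSemidef.sqrt_eq_cfcSqrt {n 𝕜 : Type*} [Fintype n] [RCLike 𝕜] [DecidableEq n]
    {A : Matrix n n 𝕜} (hA : A.PosSemidef) : hA.sqrt = CFC.sqrt A := by
  rw [CFC.sqrt_eq_real_sqrt A hA.nonneg, cfcₙ_eq_cfc, hA.1.cfc_eq]
  simp [Matrix.PosSemidef.sqrt, Matrix.IsHermitian.cfc, Unitary.conjStarAlgAut_apply,
    Function.comp_def]

open scoped MatrixOrder in
lemma Matrix.PosSemidef.eq_sqrt_of_sq_eq {n 𝕜 : Type*} [Fintype n] [RCLike 𝕜] [DecidableEq n]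
    {A B : Matrix n n 𝕜} (hB : B.PosSemidef) (hA : A.PosSemidef) (h : B ^ 2 = A) :
    B = hA.sqrt := by
  rw [hA.sqrt_eq_cfcSqrt]
  exact (CFC.sqrt_unique (by rw [← sq, h]) hB.nonneg).symm

open scoped MatrixOrder in
lemma Matrix.PosSemidef.posSemidef_sqrt {n 𝕜 : Type*} [Fintype n] [RCLike 𝕜] [DecidableEq n]
    {A : Matrix n n 𝕜} (hA : A.PosSemidef) : hA.sqrt.PosSemidef := by
  rw [hA.sqrt_eq_cfcSqrt]
  exact (CFC.sqrt_nonneg A).posSemidef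

open scoped MatrixOrder in
lemma Matrix.PosSemidef.sqrt_mul_self {n 𝕜 : Type*} [Fintype n] [RCLike 𝕜] [DecidableEq n]
    {A : Matrix n n 𝕜} (hA : A.PosSemidef) : hA.sqrt * hA.sqrt = A := by
  rw [hA.sqrt_eq_cfcSqrt]
  exact CFC.sqrt_mul_sqrt_self A hA.nonneg

theorem qubit_root_fidelity_analytic (l θ φ : ℝ)
    (hl : l ∈ Set.Icc (0 : ℝ) 1)
    (hθ : θ ∈ Set.Icc (0 : ℝ) (Real.pi / 2))
    (k : ℝ) (hk : k = 1 - 2 * l)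
    (ρ σ : Matrix (Fin 2) (Fin 2) ℂ)
    (s₁ s₂ : Fin 2 → ℂ)
    (hs₁ : s₁ = ![(Real.cos θ : ℂ), Complex.exp (Complex.I * φ) * Real.sin θ])
    (hs₂ : s₂ = ![-(Complex.exp (-(Complex.I * φ))) * Real.sin θ, (Real.cos θ : ℂ)])
    (hρ : ρ = !![(l : ℂ), 0; 0, ((1 - l : ℝ) : ℂ)])
    (hσ : σ = (l : ℂ) • vecMulVec s₁ (star s₁)
        + ((1 - l : ℝ) : ℂ) • vecMulVec s₂ (star s₂))
    (Fp Fm : ℝ)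
    (hFp : Fp = (1 / 2) * Real.sqrt (1 + k ^ 2 * Real.cos (2 * θ)
        + 2 * k * Real.cos θ * Real.sqrt (1 - k ^ 2 * Real.sin θ ^ 2)))
    (hFm : Fm = (1 / 2) * Real.sqrt (1 + k ^ 2 * Real.cos (2 * θ)
        - 2 * k * Real.cos θ * Real.sqrt (1 - k ^ 2 * Real.sin θ ^ 2)))
    (hρpsd : ρ.PosSemidef)
    (hmid : (hρpsd.sqrt * σ * hρpsd.sqrt).PosSemidef) :
    hmid.sqrt.trace = ((Fp + Fm : ℝ) : ℂ) ∧
    Real.arccos (hmid.sqrt.trace.re) = Real.arccos (Fp + Fm) := by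
  obtain ⟨hl0, hl1⟩ := hl
  obtain ⟨hθ0, hθ1⟩ := hθ
  have hc0 : 0 ≤ Real.cos θ := Real.cos_nonneg_of_mem_Icc ⟨by linarith [Real.pi_pos], hθ1⟩
  have hcs : Real.sin θ ^ 2 + Real.cos θ ^ 2 = 1 := Real.sin_sq_add_cos_sq θ
  have h1l : (0 : ℝ) ≤ 1 - l := by linarith
  have hk2 : k ^ 2 ≤ 1 := by nlinarith
  set c := Real.cos θ with hcdef
  set s := Real.sin θ with hsdef
  have hs2le : s ^ 2 ≤ 1 := by nlinarith [sq_nonneg c]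
  -- the square root of ρ
  set Q : Matrix (Fin 2) (Fin 2) ℂ :=
    Matrix.diagonal ![(Real.sqrt l : ℂ), (Real.sqrt (1 - l) : ℂ)] with hQdef
  have hQpsd : Q.PosSemidef := by
    refine Matrix.PosSemidef.diagonal ?_
    intro i
    fin_cases i <;> simp <;>
      exact Complex.zero_le_real.mpr (Real.sqrt_nonneg _)
  have hQ2 : Q ^ 2 = ρ := by
    rw [pow_two, hQdef, hρ, Matrix.diagonal_mul_diagonal]
    ext i j
    fin_cases i <;> fin_cases j <;>
      simp [Matrix.diagonal, ← Complex.ofReal_mul,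
        Real.mul_self_sqrt hl0, Real.mul_self_sqrt h1l]
  have hQs : Q = hρpsd.sqrt := hQpsd.eq_sqrt_of_sq_eq hρpsd hQ2
  have hee : Complex.exp (Complex.I * φ) * Complex.exp (-(Complex.I * φ)) = 1 := by
    rw [← Complex.exp_add]; simp
  -- explicit form of σ
  have hσ' : σ = !![((l * c ^ 2 + (1 - l) * s ^ 2 : ℝ) : ℂ),
      -((k * (c * s) : ℝ) : ℂ) * Complex.exp (-(Complex.I * φ));
      -((k * (c * s) : ℝ) : ℂ) * Complex.exp (Complex.I * φ),
      ((l * s ^ 2 + (1 - l) * c ^ 2 : ℝ) : ℂ)] := by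
    subst hσ hs₁ hs₂ hk
    ext i j
    fin_cases i <;> fin_cases j <;>
      simp only [Matrix.add_apply, Matrix.smul_apply, Matrix.vecMulVec_apply] <;>
      simp [Matrix.vecMulVec_apply, ← Complex.exp_conj, ← Complex.cos_conj,
        ← Complex.sin_conj, _root_.map_mul, map_neg, Complex.conj_I,
        Complex.conj_ofReal, Complex.exp_neg, hcdef, hsdef] <;>
      first
        | ring1
        | linear_combination ((1 : ℂ) - l) * Complex.sin (θ : ℂ) ^ 2 *
            (mul_inv_cancel₀ (Complex.exp_ne_zero (Complex.I * (φ : ℂ))))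
        | linear_combination (l : ℂ) * Complex.sin (θ : ℂ) ^ 2 *
            (mul_inv_cancel₀ (Complex.exp_ne_zero (Complex.I * (φ : ℂ))))
  have hll : ((Real.sqrt l : ℂ)) * ((Real.sqrt l : ℂ)) = (l : ℂ) := by
    rw [← Complex.ofReal_mul, Real.mul_self_sqrt hl0]
  have hll2 : ((Real.sqrt (1 - l) : ℂ)) * ((Real.sqrt (1 - l) : ℂ)) = 1 - (l : ℂ) := by
    rw [← Complex.ofReal_mul, Real.mul_self_sqrt h1l]
    push_cast
    ring
  -- trace of the middle matrix
  have htrM : (hρpsd.sqrt * σ * hρpsd.sqrt).trace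
      = ((l * (l * c ^ 2 + (1 - l) * s ^ 2) + (1 - l) * (l * s ^ 2 + (1 - l) * c ^ 2) : ℝ) : ℂ) := by
    rw [← hQs, hσ']
    simp [hQdef, Matrix.trace_fin_two, Matrix.mul_apply, Fin.sum_univ_two, Matrix.diagonal]
    push_cast
    linear_combination ((l : ℂ) * c ^ 2 + (1 - (l : ℂ)) * s ^ 2) * hll
      + ((l : ℂ) * s ^ 2 + (1 - (l : ℂ)) * c ^ 2) * hll2
  -- determinant of σ
  have hcsC : ((s : ℂ)) ^ 2 + ((c : ℂ)) ^ 2 = 1 := by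
    norm_cast
  have hkC : (k : ℂ) = 1 - 2 * l := by push_cast [hk]; ring
  have hdetσ : σ.det = ((l * (1 - l) : ℝ) : ℂ) := by
    rw [hσ', Matrix.det_fin_two_of]
    push_cast
    linear_combination (-((k : ℂ)) ^ 2 * c ^ 2 * s ^ 2) * hee
      + ((l : ℂ) * (1 - l) * ((s : ℂ) ^ 2 + (c : ℂ) ^ 2 + 1)) * hcsC
      + (-(c : ℂ) ^ 2 * (s : ℂ) ^ 2 * (1 - 2 * l + (k : ℂ))) * hkC
  have hdetQ : Q.det = ((Real.sqrt l : ℂ)) * ((Real.sqrt (1 - l) : ℂ)) := by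
    simp [hQdef, Fin.prod_univ_two]
  -- determinant of the middle matrix
  have hdetM : (hρpsd.sqrt * σ * hρpsd.sqrt).det = (((l * (1 - l)) ^ 2 : ℝ) : ℂ) := by
    rw [Matrix.det_mul, Matrix.det_mul, ← hQs, hdetQ, hdetσ]
    push_cast
    linear_combination ((l : ℂ) * (1 - l) * ((Real.sqrt (1 - l) : ℂ)) * ((Real.sqrt (1 - l) : ℂ))) * hll
      + ((l : ℂ) * (1 - l) * l) * hll2
  -- properties of B = sqrt of the middle matrix
  set B := hmid.sqrt with hBdef
  have hBpsd : B.PosSemidef := hmid.posSemidef_sqrt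
  have hBB : B * B = hρpsd.sqrt * σ * hρpsd.sqrt := hmid.sqrt_mul_self
  -- Cayley–Hamilton style trace identity for 2×2 matrices
  have hCH : B.trace ^ 2 = (B * B).trace + 2 * B.det := by
    simp [Matrix.trace_fin_two, Matrix.det_fin_two, Matrix.mul_apply, Fin.sum_univ_two]
    ring
  -- det B is a nonnegative real
  obtain ⟨r, hr0, hrB⟩ : ∃ r : ℝ, 0 ≤ r ∧ B.det = (r : ℂ) := by
    refine ⟨hBpsd.1.eigenvalues 0 * hBpsd.1.eigenvalues 1,
      mul_nonneg (hBpsd.eigenvalues_nonneg 0) (hBpsd.eigenvalues_nonneg 1), ?_⟩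
    rw [hBpsd.1.det_eq_prod_eigenvalues, Fin.prod_univ_two]
    norm_num
  -- trace B is a nonnegative real
  obtain ⟨t, ht0, htB⟩ : ∃ t : ℝ, 0 ≤ t ∧ B.trace = (t : ℂ) := by
    have hδ : ∀ i, 0 ≤ B i i := by
      intro i
      have := hBpsd.dotProduct_mulVec_nonneg (Pi.single i 1)
      simpa [Matrix.mulVec, dotProduct, Pi.single_apply, Fin.sum_univ_two] using this
    have h0 := hδ 0
    have h1 := hδ 1
    rw [Complex.nonneg_iff] at h0 h1
    refine ⟨(B 0 0).re + (B 1 1).re, by linarith [h0.1, h1.1], ?_⟩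
    rw [Matrix.trace_fin_two]
    rw [Complex.ext_iff]
    constructor <;> simp [← h0.2, ← h1.2]
  -- compute r
  have hr : r = l * (1 - l) := by
    have h2 : (r : ℂ) ^ 2 = (((l * (1 - l)) ^ 2 : ℝ) : ℂ) := by
      rw [← hrB, ← hdetM, ← hBB, Matrix.det_mul]
      ring
    have h2' : r ^ 2 = (l * (1 - l)) ^ 2 := by
      exact_mod_cast h2
    rw [← Real.sqrt_sq hr0, h2', Real.sqrt_sq (mul_nonneg hl0 h1l)]
  -- compute t²
  have ht2 : t ^ 2 = 1 - k ^ 2 * s ^ 2 := by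
    have h2 : (t : ℂ) ^ 2 = ((l * (l * c ^ 2 + (1 - l) * s ^ 2)
        + (1 - l) * (l * s ^ 2 + (1 - l) * c ^ 2) + 2 * (l * (1 - l)) : ℝ) : ℂ) := by
      rw [← htB, hCH, hBB, htrM, hrB, hr]
      push_cast
      ring
    have h2' : t ^ 2 = l * (l * c ^ 2 + (1 - l) * s ^ 2)
        + (1 - l) * (l * s ^ 2 + (1 - l) * c ^ 2) + 2 * (l * (1 - l)) := by
      exact_mod_cast h2
    rw [h2', hk]
    linear_combination (l ^ 2 + (1 - l) ^ 2) * hcs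
  -- the square root g
  set g := Real.sqrt (1 - k ^ 2 * s ^ 2) with hgdef
  have hg0 : 0 ≤ g := Real.sqrt_nonneg _
  have hg2 : g ^ 2 = 1 - k ^ 2 * s ^ 2 :=
    Real.sq_sqrt (by nlinarith)
  have htg : t = g := by
    rw [← Real.sqrt_sq ht0, ht2, ← hg2, Real.sqrt_sq hg0]
  -- bounds for g ± k c
  have hkc2 : (k * c) ^ 2 ≤ g ^ 2 := by nlinarith
  have habs : |k * c| ≤ g := by
    rw [← Real.sqrt_sq_eq_abs, ← Real.sqrt_sq hg0]
    exact Real.sqrt_le_sqrt hkc2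
  obtain ⟨habs1, habs2⟩ := abs_le.mp habs
  have hgp : 0 ≤ g + k * c := by linarith
  have hgm : 0 ≤ g - k * c := by linarith
  -- explicit values of Fp, Fm
  have hFp' : Fp = (g + k * c) / 2 := by
    rw [hFp]
    have harg : 1 + k ^ 2 * Real.cos (2 * θ) + 2 * k * c * g = (g + k * c) ^ 2 := by
      rw [Real.cos_two_mul]
      linear_combination k ^ 2 * hcs - hg2
    rw [harg, Real.sqrt_sq hgp]
    ring
  have hFm' : Fm = (g - k * c) / 2 := by
    rw [hFm]
    have harg : 1 + k ^ 2 * Real.cos (2 * θ) - 2 * k * c * g = (g - k * c) ^ 2 := by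
      rw [Real.cos_two_mul]
      linear_combination k ^ 2 * hcs - hg2
    rw [harg, Real.sqrt_sq hgm]
    ring
  have hsum : Fp + Fm = t := by rw [hFp', hFm', htg]; ring
  constructor
  · rw [htB, hsum]
  · rw [htB, hsum]
    simp
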